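/- Let a and b be real numbers, α = a + i·b, and let z be a complex number. Let w be a complex number with w ≠ 0 and w² = (z − α)(z − conj(α)). Define h_{xz} = −(z − a)/w and h_{tz} = −2(z² − a²)/w − 2w. Then Im( conj(h_{xz}) · h_{tz} ) = 2·(Im z)·( 2|z − a|² − b² ) / |w|². -/

import Mathlib

open Complex

/-- Formula (4.15) of the paper: with `α = a + ib`, `w` a branch of
`R₀(z) = √((z−α)(z−conj α))`, `h_{xz} = −(z−a)/w`, `h_{tz} = −2(z²−a²)/w − 2w`, one has
`Im(conj(h_{xz})·h_{tz}) = 2·Im z·(2|z−a|² − b²)/|w|²`. -/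
theorem im_conj_hxz_mul_htz (a b : ℝ) (z w : ℂ)
    (hw : w ≠ 0) (hw2 : w ^ 2 = (z - (a + b * I)) * (z - (starRingEnd ℂ) (a + b * I))) :
    (((starRingEnd ℂ) (-(z - (a : ℂ)) / w)) *
        (-2 * (z ^ 2 - (a : ℂ) ^ 2) / w - 2 * w)).im =
      2 * z.im * (2 * ‖z - (a : ℂ)‖^2 - b ^ 2) / ‖w‖^2 := by
  have hcw : (starRingEnd ℂ) w ≠ 0 := by simpa using hw
  have hw2' : w ^ 2 = (z - (a:ℂ)) ^ 2 + (b:ℂ) ^ 2 := by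
    rw [hw2]
    simp only [map_add, map_mul, Complex.conj_I, Complex.conj_ofReal]
    linear_combination -(b:ℂ)^2 * Complex.I_sq
  have habsne : (‖w‖ ^ 2 : ℝ) ≠ 0 :=
    pow_ne_zero 2 (norm_ne_zero_iff.2 hw)
  have habs : ((‖w‖ ^ 2 : ℝ) : ℂ) = w * (starRingEnd ℂ) w := by
    rw [Complex.sq_norm]
    exact_mod_cast (Complex.mul_conj w).symm
  have key : (((starRingEnd ℂ) (-(z - (a : ℂ)) / w)) *
        (-2 * (z ^ 2 - (a : ℂ) ^ 2) / w - 2 * w)) =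
      (4 * ((starRingEnd ℂ) (z - (a:ℂ)) * (z - (a:ℂ))) * z
        + 2 * ((b:ℂ)^2) * (starRingEnd ℂ) (z - (a:ℂ)))
        / ((‖w‖ ^ 2 : ℝ) : ℂ) := by
    rw [habs, map_div₀, map_neg, map_sub, Complex.conj_ofReal]
    field_simp
    linear_combination (2 * ((starRingEnd ℂ) z - (a:ℂ))) * hw2'
  rw [key, Complex.div_ofReal_im]
  have hnsq : ((starRingEnd ℂ) (z - (a:ℂ)) * (z - (a:ℂ))) = ((‖z - (a:ℂ)‖ ^ 2 : ℝ) : ℂ) := by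
    rw [Complex.sq_norm]
    rw [mul_comm]
    exact_mod_cast Complex.mul_conj (z - (a:ℂ))
  rw [hnsq]
  simp only [Complex.add_im, Complex.mul_im, Complex.ofReal_re, Complex.ofReal_im,
    Complex.conj_im, Complex.conj_re, Complex.sub_im, Complex.sub_re,
    Complex.re_ofNat, Complex.im_ofNat, Complex.mul_re, ← Complex.ofReal_pow]
  field_simp
  ring
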